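/- For all m ≥ 1 and n ≥ 2, there exists an m-state realtime deterministic pushdown automaton with n pushdown symbols accepting the language L_{m,n} = { b^k a | 1 ≤ k ≤ mn−1 }. -/

import Mathlib

/-- The binary input alphabet `{a, b}`. -/
inductive Bin : Type
  | a : Bin
  | b : Bin
deriving DecidableEq

/-- The language `L_n = { b^k a | 1 ≤ k ≤ n-1 }` over `{a, b}`. -/
def Ln (n : ℕ) : Set (List Bin) :=
  {w | ∃ k, 1 ≤ k ∧ k ≤ n - 1 ∧ w = List.replicate k Bin.b ++ [Bin.a]}

/-- The language `L_{m,n} = { b^k a | 1 ≤ k ≤ mn-1 }` over `{a, b}`. -/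
def Lmn (m n : ℕ) : Set (List Bin) :=
  {w | ∃ k, 1 ≤ k ∧ k ≤ m * n - 1 ∧ w = List.replicate k Bin.b ++ [Bin.a]}

/-- A realtime deterministic pushdown automaton (no ε-moves) over input
alphabet `A`: state set `Q`, pushdown alphabet `Γ`, partial transition
function `δ`, initial state `q0`, initial pushdown symbol `Z0`, and accepting
states `F`. -/
structure RPDA (A : Type) where
  Q : Type
  [instQ : Fintype Q]
  Γ : Type
  [instΓ : Fintype Γ]
  δ : Q → Γ → A → Option (Q × List Γ)
  q0 : Q
  Z0 : Γ
  F : Set Q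

attribute [instance] RPDA.instQ RPDA.instΓ

/-- `M.Steps c w c'` : from configuration `c` (state and pushdown content,
top of the pushdown being the head of the list) the automaton reads the input
string `w` and reaches configuration `c'`. -/
inductive RPDA.Steps {A : Type} (M : RPDA A) :
    M.Q × List M.Γ → List A → M.Q × List M.Γ → Prop
  | refl (c : M.Q × List M.Γ) : RPDA.Steps M c [] c
  | step {q : M.Q} {X : M.Γ} {γ : List M.Γ} {a : A} {p : M.Q} {w : List M.Γ}
      {ws : List A} {c : M.Q × List M.Γ} :
      M.δ q X a = some (p, w) → RPDA.Steps M (p, w ++ γ) ws c →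
      RPDA.Steps M (q, X :: γ) (a :: ws) c

/-- Acceptance by final state and empty pushdown. -/
def RPDA.Accepts {A : Type} (M : RPDA A) (w : List A) : Prop :=
  ∃ f ∈ M.F, M.Steps (M.q0, [M.Z0]) w (f, [])

-- Auxiliary development
def RPDA.run {A : Type} (M : RPDA A) : M.Q × List M.Γ → List A → Option (M.Q × List M.Γ)
  | c, [] => some c
  | (_, []), _ :: _ => none
  | (q, X :: γ), a :: ws =>
      match M.δ q X a with
      | none => none
      | some (p, w) => RPDA.run M (p, w ++ γ) ws

lemma RPDA.steps_iff_run {A : Type} (M : RPDA A) (c c' : M.Q × List M.Γ) (w : List A) :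
    M.Steps c w c' ↔ M.run c w = some c' := by
  constructor
  · intro h
    induction h with
    | refl c => obtain ⟨q, γ⟩ := c; cases γ <;> rfl
    | step hδ _ ih => simp [RPDA.run, hδ, ih]
  · intro h
    induction w generalizing c with
    | nil => simp [RPDA.run] at h; subst h; exact .refl _
    | cons a ws ih =>
      obtain ⟨q, γ⟩ := c
      cases γ with
      | nil => simp [RPDA.run] at h
      | cons X γ =>
        cases hδ : M.δ q X a with
        | none => simp [RPDA.run, hδ] at h
        | some pw =>
          obtain ⟨p, wγ⟩ := pw
          simp [RPDA.run, hδ] at h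
          exact .step hδ (ih _ h)

lemma RPDA.run_append {A : Type} (M : RPDA A) (u v : List A) :
    ∀ c, M.run c (u ++ v) = (M.run c u).bind fun c' => M.run c' v := by
  induction u with
  | nil => intro c; simp [RPDA.run]
  | cons a u ih =>
    rintro ⟨q, γ⟩
    cases γ with
    | nil => simp [RPDA.run]
    | cons X γ =>
      cases hδ : M.δ q X a with
      | none => simp [RPDA.run, hδ]
      | some pw => obtain ⟨p, w⟩ := pw; simp [RPDA.run, hδ, ih]

def Mach (m n : ℕ) (hm : 1 ≤ m) (hn : 2 ≤ n) : RPDA Bin where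
  Q := Fin m
  Γ := Fin n
  δ q i c :=
    match c with
    | .b =>
        if h : (i : ℕ) + 1 < n then some (q, [⟨(i : ℕ) + 1, h⟩])
        else if h' : (q : ℕ) + 1 < m then some (⟨(q : ℕ) + 1, h'⟩, [⟨0, by omega⟩])
        else none
    | .a =>
        if (q : ℕ) = 0 ∧ (i : ℕ) = 0 then none
        else some (⟨m - 1, by omega⟩, [])
  q0 := ⟨0, hm⟩
  Z0 := ⟨0, by omega⟩
  F := {⟨m - 1, by omega⟩}

lemma run_bs (m n : ℕ) (hm : 1 ≤ m) (hn : 2 ≤ n) :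
    ∀ k, k ≤ m * n - 1 →
      ∃ (q i : ℕ) (hq : q < m) (hi : i < n), q * n + i = k ∧
        (Mach m n hm hn).run ((Mach m n hm hn).q0, [(Mach m n hm hn).Z0])
          (List.replicate k Bin.b) = some (⟨q, hq⟩, [⟨i, hi⟩]) := by
  intro k
  induction k with
  | zero => intro _; exact ⟨0, 0, by omega, by omega, by omega, rfl⟩
  | succ k ih =>
    intro hk
    obtain ⟨q, i, hq, hi, hqi, hrun⟩ := ih (by omega)
    rw [List.replicate_succ', RPDA.run_append, hrun]
    by_cases h : i + 1 < n
    · refine ⟨q, i + 1, hq, h, by omega, ?_⟩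
      simp [RPDA.run, Mach, h]
    · -- i = n - 1, need q + 1 < m
      have hmn : 2 ≤ m * n := le_trans hn (Nat.le_mul_of_pos_left n hm)
      have hi' : i = n - 1 := by omega
      have h1 : (q + 1) * n ≤ m * n - 1 := by
        have : (q + 1) * n = q * n + n := by ring
        omega
      have h2 : q + 1 < m := by
        by_contra hc
        have : m * n ≤ (q + 1) * n := Nat.mul_le_mul_right n (by omega)
        omega
      refine ⟨q + 1, 0, h2, by omega, by ring_nf; omega, ?_⟩
      simp [RPDA.run, Mach, h, h2]

lemma run_bs_none (m n : ℕ) (hm : 1 ≤ m) (hn : 2 ≤ n) :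
    ∀ k, m * n - 1 < k →
      (Mach m n hm hn).run ((Mach m n hm hn).q0, [(Mach m n hm hn).Z0])
        (List.replicate k Bin.b) = none := by
  intro k hk
  have hmn : 2 ≤ m * n := le_trans hn (Nat.le_mul_of_pos_left n hm)
  obtain ⟨q, i, hq, hi, hqi, hrun⟩ := run_bs m n hm hn (m * n - 1) le_rfl
  -- q = m - 1 and i = n - 1
  have hmn' : m * n = (m - 1) * n + n := by
    have : m = (m - 1) + 1 := by omega
    nth_rewrite 1 [this]; ring
  have hqle : m - 1 ≤ q := by
    have h1 : (m - 1) * n ≤ q * n := by omega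
    exact Nat.le_of_mul_le_mul_right h1 (by omega)
  have hq' : q = m - 1 := by omega
  have hi' : i = n - 1 := by subst hq'; omega
  have hsplit : List.replicate k Bin.b
      = List.replicate (m * n - 1) Bin.b ++ (Bin.b :: List.replicate (k - (m*n-1) - 1) Bin.b) := by
    rw [← List.replicate_succ, ← List.replicate_add]
    congr 1; omega
  rw [hsplit, RPDA.run_append, hrun]
  subst hq' hi'
  have c1 : ¬ ((n : ℕ) - 1 + 1 < n) := by omega
  have c2 : ¬ ((m : ℕ) - 1 + 1 < m) := by omega
  simp [RPDA.run, Mach, c1, c2]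

lemma bin_decomp (w : List Bin) :
    (∃ k, w = List.replicate k Bin.b) ∨
    (∃ k rest, w = List.replicate k Bin.b ++ Bin.a :: rest) := by
  induction w with
  | nil => exact Or.inl ⟨0, rfl⟩
  | cons x t ih =>
    cases x with
    | a => exact Or.inr ⟨0, t, rfl⟩
    | b =>
      rcases ih with ⟨k, rfl⟩ | ⟨k, rest, rfl⟩
      · exact Or.inl ⟨k + 1, by rw [List.replicate_succ]⟩
      · exact Or.inr ⟨k + 1, rest, by rw [List.replicate_succ]; rfl⟩

/-- For all `m ≥ 1` and `n ≥ 2`, there exists an `m`-state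
realtime deterministic pushdown automaton with `n` pushdown symbols accepting
`L_{m,n} = { b^k a | 1 ≤ k ≤ mn-1 }`. -/
theorem exists_rpda_for_Lmn (m n : ℕ) (hm : 1 ≤ m) (hn : 2 ≤ n) :
    ∃ M : RPDA Bin, Fintype.card M.Q = m ∧ Fintype.card M.Γ = n ∧
      ∀ w : List Bin, M.Accepts w ↔ w ∈ Lmn m n := by
  refine ⟨Mach m n hm hn, Fintype.card_fin m, Fintype.card_fin n, ?_⟩
  have hmn : 2 ≤ m * n := le_trans hn (Nat.le_mul_of_pos_left n hm)
  intro w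
  constructor
  · rintro ⟨f, hf, hsteps⟩
    rw [RPDA.steps_iff_run] at hsteps
    rcases bin_decomp w with ⟨k, rfl⟩ | ⟨k, rest, rfl⟩
    · by_cases hk : k ≤ m * n - 1
      · obtain ⟨q, i, hq, hi, hqi, hrun⟩ := run_bs m n hm hn k hk
        rw [hrun] at hsteps
        simp at hsteps
        exact absurd (congrArg Prod.snd hsteps) (by simp)
      · rw [run_bs_none m n hm hn k (by omega)] at hsteps
        exact absurd hsteps (by simp)
    · by_cases hk : k ≤ m * n - 1
      · obtain ⟨q, i, hq, hi, hqi, hrun⟩ := run_bs m n hm hn k hk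
        rw [RPDA.run_append, hrun] at hsteps
        by_cases h0 : q = 0 ∧ i = 0
        · have hδ : (Mach m n hm hn).δ ⟨q, hq⟩ ⟨i, hi⟩ Bin.a = none := by
            simp only [Mach]
            rw [if_pos h0]
          simp [RPDA.run, hδ] at hsteps
        · have hδ : (Mach m n hm hn).δ ⟨q, hq⟩ ⟨i, hi⟩ Bin.a
              = some (⟨m - 1, by omega⟩, []) := by
            simp only [Mach]
            rw [if_neg h0]
          cases rest with
          | nil =>
            refine ⟨k, ?_, hk, rfl⟩
            rcases Nat.eq_zero_or_pos k with rfl | hpos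
            · exfalso; apply h0
              constructor
              · rcases Nat.mul_eq_zero.mp (by omega : q * n = 0) with h | h
                · exact h
                · omega
              · omega
            · exact hpos
          | cons y rest' =>
            exfalso
            simp [RPDA.run, hδ] at hsteps
      · rw [RPDA.run_append, run_bs_none m n hm hn k (by omega)] at hsteps
        exact absurd hsteps (by simp)
  · rintro ⟨k, hk1, hk2, rfl⟩
    refine ⟨⟨m - 1, by omega⟩, rfl, ?_⟩
    rw [RPDA.steps_iff_run]
    obtain ⟨q, i, hq, hi, hqi, hrun⟩ := run_bs m n hm hn k hk2
    rw [RPDA.run_append, hrun]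
    have h0 : ¬ (q = 0 ∧ i = 0) := by
      rintro ⟨rfl, rfl⟩; omega
    have hδ : (Mach m n hm hn).δ ⟨q, hq⟩ ⟨i, hi⟩ Bin.a
        = some (⟨m - 1, by omega⟩, []) := by
      simp only [Mach]
      rw [if_neg h0]
    simp [RPDA.run, hδ]
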